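/- Suppose the put-option market with strikes 0 < K_1 < ... < K_N, asks A_n, bids B_n, and bond price D is arbitrage-free. For 0 < i < j ≤ N, define g_{i,j}(K) = ((A_j − B_i)/(K_j − K_i))(K − K_j) + A_j, the line through (K_i, B_i) and (K_j, A_j). Then g_{i,j}(0) < 0. -/

import Mathlib

/-- The affine line through `(K i, A i)` and `(K j, A j)`. -/
noncomputable def line (K A : ℕ → ℝ) (i j : ℕ) (x : ℝ) : ℝ :=
  (A j - A i) / (K j - K i) * (x - K i) + A i

/-- Initial cost of a static portfolio consisting of `β` zero-coupon bonds (price `D`)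
and `π n` put options at strike `K n` (asks used for longs, bids for shorts). -/
noncomputable def putCost (N : ℕ) (A B : ℕ → ℝ) (D β : ℝ) (π : ℕ → ℝ) : ℝ :=
  (max β 0 * D - max (-β) 0 * D) +
    ∑ n ∈ Finset.Icc 1 N, (max (π n) 0 * A n - max (-π n) 0 * B n)

/-- Terminal payoff of the portfolio in state `ω` (terminal asset price). -/
noncomputable def putValue (N : ℕ) (K : ℕ → ℝ) (β : ℝ) (π : ℕ → ℝ) (ω : ℝ) : ℝ :=
  β + ∑ n ∈ Finset.Icc 1 N, π n * max (K n - ω) 0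

/-- The put-option market `(K n, A n, B n)_{1 ≤ n ≤ N}` with bond price `D` is
arbitrage-free: no static portfolio has nonnegative net terminal value in every
state and positive net terminal value in some state. -/
def PutArbitrageFree (N : ℕ) (K A B : ℕ → ℝ) (D : ℝ) : Prop :=
  ¬ ∃ (β : ℝ) (π : ℕ → ℝ),
      (∀ ω : ℝ, 0 ≤ ω → 0 ≤ putValue N K β π ω - putCost N A B D β π / D) ∧
      (∃ ω : ℝ, 0 ≤ ω ∧ 0 < putValue N K β π ω - putCost N A B D β π / D)

/-- Lemma 3.7: in an arbitrage-free put market, for `0 < i < j ≤ N` the line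
`g_{i,j}` through `(K i, B i)` and `(K j, A j)` has negative intercept. -/
theorem stmt_4 (N : ℕ) (K A B : ℕ → ℝ) (D : ℝ) (hD : 0 < D)
    (hKpos : 0 < K 1)
    (hKmono : ∀ m n : ℕ, m < n → n ≤ N → K m < K n)
    (hBA : ∀ n : ℕ, 1 ≤ n → n ≤ N → B n ≤ A n)
    (hAF : PutArbitrageFree N K A B D)
    (i j : ℕ) (hi : 0 < i) (hij : i < j) (hjN : j ≤ N) :
    (A j - B i) / (K j - K i) * (0 - K j) + A j < 0 := by
  have hiN : i ≤ N := le_trans (le_of_lt hij) hjN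
  have hKij : K i < K j := hKmono i j hij hjN
  have hKi : 0 < K i := by
    rcases eq_or_lt_of_le (show 1 ≤ i from hi) with h1 | h1
    · simpa [← h1] using hKpos
    · exact lt_trans hKpos (hKmono 1 i h1 hiN)
  have hKj : 0 < K j := lt_trans hKi hKij
  by_contra hcon
  push_neg at hcon
  have hc : (A j - B i) / (K j - K i) * (K j - K i) = A j - B i :=
    div_mul_cancel₀ _ (ne_of_gt (sub_pos.2 hKij))
  -- 0 ≤ g(0) means A j * K i ≤ B i * K j
  have hBK : A j * K i ≤ B i * K j := by nlinarith [hcon, hc]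
  apply hAF
  refine ⟨0, fun n => if n = i then (-1 : ℝ) else if n = j then K i / K j else 0, ?_, ?_⟩
  · intro ω hω
    have hne : i ≠ j := ne_of_lt hij
    have hcost : putCost N A B D 0
        (fun n => if n = i then (-1 : ℝ) else if n = j then K i / K j else 0)
        = K i / K j * A j - B i := by
      unfold putCost
      rw [Finset.sum_eq_add i j hne
        (by intro c _ hc; simp [hc.1, hc.2])
        (by intro h; exact absurd (Finset.mem_Icc.2 ⟨hi, hiN⟩) h)
        (by intro h; exact absurd (Finset.mem_Icc.2 ⟨le_trans hi (le_of_lt hij), hjN⟩) h)]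
      have h1 : max (-1 : ℝ) 0 = 0 := by norm_num
      have h2 : max (K i / K j) 0 = K i / K j := max_eq_left (le_of_lt (div_pos hKi hKj))
      have h3 : max (-(K i / K j)) 0 = 0 := max_eq_right (neg_nonpos.2 (le_of_lt (div_pos hKi hKj)))
      simp only [if_pos rfl, if_neg hne.symm, if_neg hne, if_true]
      rw [h1, h2]
      norm_num [h3]
      ring
    have hval : putValue N K 0
        (fun n => if n = i then (-1 : ℝ) else if n = j then K i / K j else 0) ω
        = -max (K i - ω) 0 + K i / K j * max (K j - ω) 0 := by
      unfold putValue
      rw [Finset.sum_eq_add i j hne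
        (by intro c _ hc; simp [hc.1, hc.2])
        (by intro h; exact absurd (Finset.mem_Icc.2 ⟨hi, hiN⟩) h)
        (by intro h; exact absurd (Finset.mem_Icc.2 ⟨le_trans hi (le_of_lt hij), hjN⟩) h)]
      simp only [if_pos rfl, if_neg hne.symm, if_neg hne, if_true]
      ring
    rw [hval, hcost]
    have hcost0 : K i / K j * A j - B i ≤ 0 := by
      rw [div_mul_eq_mul_div, sub_nonpos, div_le_iff₀ hKj]
      linarith [hBK]
    have hpay : 0 ≤ -max (K i - ω) 0 + K i / K j * max (K j - ω) 0 := by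
      rcases le_total ω (K i) with h | h
      · have m1 : max (K i - ω) 0 = K i - ω := max_eq_left (by linarith)
        have m2 : max (K j - ω) 0 = K j - ω := max_eq_left (by linarith)
        rw [m1, m2]
        have : K i / K j * (K j - ω) = K i - K i / K j * ω := by
          field_simp
        rw [this]
        have : K i / K j * ω ≤ ω := by
          have h1 : K i / K j ≤ 1 := (div_le_one hKj).2 (le_of_lt hKij)
          nlinarith
        linarith
      · have m1 : max (K i - ω) 0 = 0 := max_eq_right (by linarith)
        rw [m1]
        have : 0 ≤ K i / K j * max (K j - ω) 0 := by positivity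
        linarith
    have : 0 ≤ -(K i / K j * A j - B i) / D := by
      apply div_nonneg (by linarith) (le_of_lt hD)
    linarith [this, hpay, (by ring : -(K i / K j * A j - B i) / D = -((K i / K j * A j - B i) / D))]
  · refine ⟨K i, le_of_lt hKi, ?_⟩
    have hne : i ≠ j := ne_of_lt hij
    have hcost : putCost N A B D 0
        (fun n => if n = i then (-1 : ℝ) else if n = j then K i / K j else 0)
        = K i / K j * A j - B i := by
      unfold putCost
      rw [Finset.sum_eq_add i j hne
        (by intro c _ hc; simp [hc.1, hc.2])
        (by intro h; exact absurd (Finset.mem_Icc.2 ⟨hi, hiN⟩) h)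
        (by intro h; exact absurd (Finset.mem_Icc.2 ⟨le_trans hi (le_of_lt hij), hjN⟩) h)]
      have h1 : max (-1 : ℝ) 0 = 0 := by norm_num
      have h2 : max (K i / K j) 0 = K i / K j := max_eq_left (le_of_lt (div_pos hKi hKj))
      have h3 : max (-(K i / K j)) 0 = 0 := max_eq_right (neg_nonpos.2 (le_of_lt (div_pos hKi hKj)))
      simp only [if_pos rfl, if_neg hne.symm, if_neg hne, if_true]
      rw [h1, h2]
      norm_num [h3]
      ring
    have hval : putValue N K 0
        (fun n => if n = i then (-1 : ℝ) else if n = j then K i / K j else 0) (K i)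
        = K i / K j * (K j - K i) := by
      unfold putValue
      rw [Finset.sum_eq_add i j hne
        (by intro c _ hc; simp [hc.1, hc.2])
        (by intro h; exact absurd (Finset.mem_Icc.2 ⟨hi, hiN⟩) h)
        (by intro h; exact absurd (Finset.mem_Icc.2 ⟨le_trans hi (le_of_lt hij), hjN⟩) h)]
      simp only [if_pos rfl, if_neg hne.symm, if_neg hne, if_true]
      have m1 : max (K i - K i) 0 = 0 := by simp
      have m2 : max (K j - K i) 0 = K j - K i := max_eq_left (by linarith)
      rw [m1, m2]
      ring
    rw [hval, hcost]
    have hpay : 0 < K i / K j * (K j - K i) := by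
      apply mul_pos (div_pos hKi hKj) (by linarith)
    have hcost0 : K i / K j * A j - B i ≤ 0 := by
      rw [div_mul_eq_mul_div, sub_nonpos, div_le_iff₀ hKj]
      linarith [hBK]
    have : 0 ≤ -(K i / K j * A j - B i) / D := by
      apply div_nonneg (by linarith) (le_of_lt hD)
    linarith [(by ring : -(K i / K j * A j - B i) / D = -((K i / K j * A j - B i) / D))]
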